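/- In the multiplicative group (ZMod n²)ˣ for n = pq with distinct primes p, q, the order of the element 1 + n is exactly n. -/
import Mathlib

lemma pow_one_add_of_sq_zero {R : Type*} [CommRing R] (c : R) (h : c * c = 0) :
    ∀ k : ℕ, (1 + c) ^ k = 1 + (k : R) * c := by
  intro k
  induction k with
  | zero => simp
  | succ k ih =>
    rw [pow_succ, ih]
    push_cast
    linear_combination (k : R) * h

lemma paillier_order_aux (n : ℕ) (hn : 0 < n) (u : (ZMod (n ^ 2))ˣ)
    (hu : (u : ZMod (n ^ 2)) = 1 + (n : ℕ)) : orderOf u = n := by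
  have hn2 : ((n : ℕ) : ZMod (n ^ 2)) * ((n : ℕ) : ZMod (n ^ 2)) = 0 := by
    have h := ZMod.natCast_self (n ^ 2)
    push_cast at h
    linear_combination h
  have key : ∀ k : ℕ, ((u ^ k : (ZMod (n ^ 2))ˣ) : ZMod (n ^ 2))
      = 1 + (k : ZMod (n ^ 2)) * ((n : ℕ) : ZMod (n ^ 2)) := by
    intro k
    rw [Units.val_pow_eq_pow_val, hu, pow_one_add_of_sq_zero _ hn2]
  have hun : u ^ n = 1 := by
    apply Units.ext
    rw [key n]
    push_cast
    linear_combination hn2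
  have hdvd : orderOf u ∣ n := orderOf_dvd_of_pow_eq_one hun
  have hdvd2 : n ∣ orderOf u := by
    have h1 : ((u ^ orderOf u : (ZMod (n ^ 2))ˣ) : ZMod (n ^ 2)) = 1 := by
      rw [pow_orderOf_eq_one]; rfl
    rw [key] at h1
    have h0 : ((orderOf u * n : ℕ) : ZMod (n ^ 2)) = 0 := by
      push_cast
      linear_combination h1
    rw [ZMod.natCast_eq_zero_iff] at h0
    have h0' : n * n ∣ orderOf u * n := by rwa [← sq]
    exact (Nat.mul_dvd_mul_iff_right hn).mp h0'
  exact Nat.dvd_antisymm hdvd hdvd2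

/-- The order of the unit 1 + n in (ZMod n²)ˣ is exactly n, for n = pq. -/
theorem paillier_order_one_add_n (p q : ℕ) (hp : p.Prime) (hq : q.Prime) (hpq : p ≠ q)
    (u : (ZMod ((p * q) ^ 2))ˣ) (hu : (u : ZMod ((p * q) ^ 2)) = 1 + (p * q : ℕ)) :
    orderOf u = p * q :=
  paillier_order_aux (p * q) (Nat.mul_pos hp.pos hq.pos) u hu
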